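/- Let k ≥ 3, b_k = 2^{k-1} - a_{k-2} + 1, and 0 ≤ u ≤ 2^{k-1} - b_k. Then lc(B_{b_k + u}) = lc(B_{a_{k-1} + u}) and lc(B_{2^k - (b_k + u)}) = lc(B_{a_{k-1} + u}), where lc denotes the leading coefficient of the Stern polynomial. -/

import Mathlib

open Polynomial in
/-- The Stern polynomial: `B 0 = 0`, `B 1 = 1`, `B (2n) = t * B n`, `B (2n+1) = B n + B (n+1)`. -/
noncomputable def sternP : ℕ → Polynomial ℕ
  | 0 => 0
  | 1 => 1
  | n + 2 =>
    if (n + 2) % 2 = 0 then X * sternP (n / 2 + 1)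
    else sternP (n / 2 + 1) + sternP (n / 2 + 2)
decreasing_by all_goals omega

/-- The digits of a BSD representation lie in {-1, 0, 1}. -/
def IsBSDDigits {i : ℕ} (b : Fin i → ℤ) : Prop := ∀ j, b j ∈ ({-1, 0, 1} : Set ℤ)

/-- The value represented by the digit string `b` (least significant digit `b 0`). -/
def bsdVal {i : ℕ} (b : Fin i → ℤ) : ℤ := ∑ j : Fin i, b j * 2 ^ (j : ℕ)

/-- `b` is a (not necessarily reduced) non-adjacent form digit string of length `k`:
digits in {-1,0,1}, no two adjacent digits both nonzero, and nonzero leading digit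
(when `k > 0`). -/
def IsReducedNAF {k : ℕ} (b : Fin k → ℤ) : Prop :=
  IsBSDDigits b ∧
  (∀ j : Fin k, ∀ h : (j : ℕ) + 1 < k, b j = 0 ∨ b ⟨(j : ℕ) + 1, h⟩ = 0) ∧
  (∀ h : 0 < k, b ⟨k - 1, Nat.sub_lt h one_pos⟩ ≠ 0)

/-- `m` has a reduced NAF representation of bitlength `k`. -/
def HasNAFLen (m : ℤ) (k : ℕ) : Prop :=
  ∃ b : Fin k → ℤ, IsReducedNAF b ∧ bsdVal b = m

/-- `I k`: the set of positive integers of NAF-bitlength `k`. -/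
def NAFInterval (k : ℕ) : Set ℕ := {n : ℕ | HasNAFLen (n : ℤ) k}

/-- `a k = min I k`: `a 1 = 1`, `a 2 = 2`, `a k = 2^(k-2) + a (k-2)`. -/
def aseq : ℕ → ℕ
  | 0 => 0
  | 1 => 1
  | 2 => 2
  | k + 3 => 2 ^ (k + 1) + aseq (k + 1)

/-- The NAF-bitlength of `n`. -/
noncomputable def nafLen (n : ℕ) : ℕ := sInf {k : ℕ | HasNAFLen (n : ℤ) k}

/-- The minimal Hamming weight of a BSD representation of `n` of length
equal to its NAF-bitlength. -/
noncomputable def minWeight (n : ℕ) : ℕ :=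
  sInf {w : ℕ | ∃ b : Fin (nafLen n) → ℤ,
    IsBSDDigits b ∧ bsdVal b = (n : ℤ) ∧ {j | b j ≠ 0}.ncard = w}

/-- `Z n`: the number of zeros in an optimal (minimal-weight) BSD representation of `n`
of length equal to its NAF-bitlength. -/
noncomputable def Zfun (n : ℕ) : ℕ := nafLen n - minWeight n

/-- `M n`: the number of optimal (minimal-weight) BSD representations of `n`
of length equal to its NAF-bitlength. -/
noncomputable def Mfun (n : ℕ) : ℕ :=
  {b : Fin (nafLen n) → ℤ |
    IsBSDDigits b ∧ bsdVal b = (n : ℤ) ∧ {j | b j ≠ 0}.ncard = minWeight n}.ncard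

open Polynomial

lemma sternP_even (n : ℕ) : sternP (2 * n) = X * sternP n := by
  match n with
  | 0 => simp [sternP]
  | n + 1 =>
    rw [show 2 * (n+1) = (2*n) + 2 by ring, sternP]
    have h1 : (2*n + 2) % 2 = 0 := by omega
    have h2 : 2*n/2 + 1 = n + 1 := by omega
    rw [if_pos h1, h2]

lemma sternP_odd (n : ℕ) : sternP (2 * n + 1) = sternP n + sternP (n + 1) := by
  match n with
  | 0 => simp [sternP]
  | n + 1 =>
    rw [show 2 * (n+1) + 1 = (2*n+1) + 2 by ring, sternP]
    have h1 : ¬ ((2*n+1 + 2) % 2 = 0) := by omega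
    have h2 : (2*n+1)/2 + 1 = n + 1 := by omega
    have h3 : (2*n+1)/2 + 2 = n + 2 := by omega
    rw [if_neg h1, h2, h3]

lemma sternP_eval_pos : ∀ n, 1 ≤ n → 1 ≤ (sternP n).eval 1 := by
  intro n
  induction n using Nat.strong_induction_on with
  | _ n ih =>
    intro hn
    match n, hn with
    | 1, _ => simp [sternP]
    | (n+2), _ =>
      rcases Nat.even_or_odd (n+2) with ⟨j, hj⟩ | ⟨j, hj⟩
      · rw [hj, show j + j = 2 * j by ring, sternP_even]
        have := ih j (by omega) (by omega)
        simpa using this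
      · rw [hj, sternP_odd]
        have := ih (j+1) (by omega) (by omega)
        simp only [eval_add]
        omega

lemma sternP_ne_zero {n : ℕ} (hn : n ≠ 0) : sternP n ≠ 0 := by
  intro h
  have := sternP_eval_pos n (by omega)
  rw [h] at this
  simp at this

lemma degree_add_nat (p q : Polynomial ℕ) : (p + q).degree = max p.degree q.degree := by
  rcases eq_or_ne p 0 with rfl | hp
  · simp
  rcases eq_or_ne q 0 with rfl | hq
  · simp
  apply degree_add_eq_of_leadingCoeff_add_ne_zero
  have h1 : p.leadingCoeff ≠ 0 := leadingCoeff_ne_zero.mpr hp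
  omega

lemma deg_even {n : ℕ} (hn : n ≠ 0) : (sternP (2*n)).degree = (sternP n).degree + 1 := by
  rw [sternP_even]
  rw [degree_mul' (by simp [leadingCoeff_X, leadingCoeff_ne_zero.mpr (sternP_ne_zero hn)]),
    degree_X, add_comm]

lemma deg_odd (n : ℕ) :
    (sternP (2*n+1)).degree = max (sternP n).degree (sternP (n+1)).degree := by
  rw [sternP_odd, degree_add_nat]

/-- `sternP` mapped into `ℤ[X]`. -/
noncomputable def SZ (n : ℕ) : Polynomial ℤ := (sternP n).map (Nat.castRingHom ℤ)

lemma SZ_even (n : ℕ) : SZ (2*n) = X * SZ n := by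
  rw [SZ, sternP_even, Polynomial.map_mul, map_X, SZ]

lemma SZ_odd (n : ℕ) : SZ (2*n+1) = SZ n + SZ (n+1) := by
  rw [SZ, sternP_odd, Polynomial.map_add, SZ, SZ]

lemma SZ_degree (n : ℕ) : (SZ n).degree = (sternP n).degree :=
  degree_map_eq_of_injective Nat.cast_injective _

lemma SZ_lc (n : ℕ) : (SZ n).leadingCoeff = ((sternP n).leadingCoeff : ℤ) :=
  leadingCoeff_map_of_injective Nat.cast_injective _

-- aseq lemmas
lemma aseq_two : ∀ n : ℕ, aseq (n+2) + n % 2 = 2 * aseq (n+1) := by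
  intro n
  induction n using Nat.twoStepInduction with
  | zero => simp [aseq]
  | one => simp [aseq]
  | more n ih _ =>
    show aseq (n+4) + (n+2) % 2 = 2 * aseq (n+3)
    have e1 : aseq (n+4) = 2^(n+2) + aseq (n+2) := by
      rw [show n+4 = (n+1)+3 by rfl, aseq]
    have e2 : aseq (n+3) = 2^(n+1) + aseq (n+1) := by rw [aseq]
    have e3 : (2:ℕ)^(n+2) = 2 * 2^(n+1) := by ring
    omega

lemma aseq_pos : ∀ n : ℕ, 1 ≤ aseq (n+1) := by
  intro n
  induction n using Nat.twoStepInduction with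
  | zero => simp [aseq]
  | one => simp [aseq]
  | more n ih _ =>
    show 1 ≤ aseq (n+3)
    rw [aseq]
    have := Nat.two_pow_pos (n+1)
    omega

lemma aseq_le : ∀ n : ℕ, aseq (n+1) ≤ 2^n := by
  intro n
  induction n using Nat.twoStepInduction with
  | zero => simp [aseq]
  | one => simp [aseq]
  | more n ih _ =>
    show aseq (n+3) ≤ 2^(n+2)
    rw [aseq]
    have e3 : (2:ℕ)^(n+2) = 2 * 2^(n+1) := by ring
    have : (2:ℕ)^n ≤ 2^(n+1) := by omega
    omega

lemma aseq_sum : ∀ n : ℕ, aseq (n+1) + aseq (n+2) = 2^(n+1) + 1 := by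
  intro n
  induction n with
  | zero => simp [aseq]
  | succ n ih =>
    show aseq (n+2) + aseq (n+3) = 2^(n+2) + 1
    have e1 : aseq (n+3) = 2^(n+1) + aseq (n+1) := by rw [aseq]
    have e3 : (2:ℕ)^(n+2) = 2 * 2^(n+1) := by ring
    omega

lemma sternP_one : sternP 1 = 1 := by simp [sternP]

lemma sternP_two : sternP 2 = X := by
  rw [show (2:ℕ) = 2*1 by norm_num, sternP_even, sternP_one, mul_one]

lemma wb_le_add_one (a : WithBot ℕ) : a ≤ a + 1 := by
  induction a using WithBot.recBotCoe with
  | bot => simp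
  | coe n =>
    calc ((n:ℕ) : WithBot ℕ) ≤ ((n+1 : ℕ) : WithBot ℕ) := WithBot.coe_le_coe.mpr (Nat.le_succ n)
      _ = (n : WithBot ℕ) + 1 := by push_cast; ring

lemma wb_add_le (a b : WithBot ℕ) (h : a ≤ b) : a + 1 ≤ b + 1 := by
  exact add_le_add_left h 1

/-- S4: relation between degrees at `2^(n+1) - aseq (n+1)` and the successor. -/
lemma degree_at_c : ∀ n : ℕ,
    ((n+1) % 2 = 1 →
      (sternP (2^(n+1) - aseq (n+1))).degree + 1 = (sternP (2^(n+1) - aseq (n+1) + 1)).degree) ∧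
    ((n+1) % 2 = 0 →
      (sternP (2^(n+1) - aseq (n+1))).degree = (sternP (2^(n+1) - aseq (n+1) + 1)).degree) := by
  intro n
  induction n with
  | zero =>
    constructor
    · intro _
      norm_num [aseq, sternP_one, sternP_two]
    · intro h; omega
  | succ n ih =>
    show ((n+2) % 2 = 1 →
        (sternP (2^(n+2) - aseq (n+2))).degree + 1 = (sternP (2^(n+2) - aseq (n+2) + 1)).degree) ∧
      ((n+2) % 2 = 0 →
        (sternP (2^(n+2) - aseq (n+2))).degree = (sternP (2^(n+2) - aseq (n+2) + 1)).degree)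
    have hA := aseq_two n
    have hApos := aseq_pos n
    have hAle := aseq_le n
    have p1 : (2:ℕ)^(n+1) = 2*2^n := by ring
    have p2 : (2:ℕ)^(n+2) = 2*2^(n+1) := by ring
    have hc'pos : 2^(n+1) - aseq (n+1) ≠ 0 := by omega
    rcases Nat.even_or_odd n with ⟨i, hi⟩ | ⟨i, hi⟩
    · -- n even, N = n+2 even
      have hn2 : n % 2 = 0 := by omega
      have r1 : 2^(n+2) - aseq (n+2) = 2*(2^(n+1) - aseq (n+1)) := by omega
      have r2 : 2^(n+2) - aseq (n+2) + 1 = 2*(2^(n+1) - aseq (n+1)) + 1 := by omega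
      constructor
      · intro h; omega
      · intro _
        rw [r1, deg_even hc'pos, deg_odd]
        have hodd := ih.1 (by omega)
        rw [← hodd]
        exact (max_eq_right (wb_le_add_one _)).symm
    · -- n odd, N = n+2 odd
      have hn2 : n % 2 = 1 := by omega
      have r1 : 2^(n+2) - aseq (n+2) = 2*(2^(n+1) - aseq (n+1)) + 1 := by omega
      have r2 : 2^(n+2) - aseq (n+2) + 1 = 2*(2^(n+1) - aseq (n+1) + 1) := by omega
      constructor
      · intro _
        have heq := ih.2 (by omega)
        rw [r1, deg_odd,
          show 2*(2^(n+1) - aseq (n+1))+1+1 = 2*(2^(n+1) - aseq (n+1)+1) by ring,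
          deg_even (by omega), ← heq, max_self]
      · intro h; omega

lemma key : ∀ n : ℕ, ∀ m : ℕ,
    (m ≤ aseq (n+1) →
      (SZ (2^(n+2) - m) - X * SZ (2^(n+1) - m)).degree ≤ (sternP (2^(n+1) - m)).degree) ∧
    (m < aseq (n+1) →
      (SZ (2^(n+2) + m) - X * SZ (2^(n+1) - m)).degree ≤ (sternP (2^(n+1) - m)).degree) ∧
    (m = aseq (n+1) →
      (SZ (2^(n+2) + m) - X * SZ (2^(n+1) - m)).degree
        ≤ (sternP (2^(n+1) - m)).degree + 1) := by
  intro n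
  induction n with
  | zero =>
    intro m
    have s1 : SZ 1 = 1 := by rw [SZ, sternP_one, Polynomial.map_one]
    have s2 : SZ 2 = X := by rw [SZ, sternP_two, map_X]
    have s3 : SZ 3 = 1 + X := by
      rw [show (3:ℕ) = 2*1+1 by norm_num, SZ_odd, s1]
      norm_num [s2]
    have s4 : SZ 4 = X * X := by
      rw [show (4:ℕ) = 2*2 by norm_num, SZ_even, s2]
    have s5 : SZ 5 = X + (1 + X) := by
      rw [show (5:ℕ) = 2*2+1 by norm_num, SZ_odd, s2]
      norm_num [s3]
    match m with
    | 0 =>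
      refine ⟨fun _ => ?_, fun _ => ?_, fun h => ?_⟩
      · simp only [show (2:ℕ)^2 - 0 = 4 by norm_num, show (2:ℕ)^1 - 0 = 2 by norm_num,
          s4, s2, sub_self, degree_zero]
        exact bot_le
      · simp only [show (2:ℕ)^2 + 0 = 4 by norm_num, show (2:ℕ)^1 - 0 = 2 by norm_num,
          s4, s2, sub_self, degree_zero]
        exact bot_le
      · have ha : aseq (0+1) = 1 := rfl
        omega
    | 1 =>
      refine ⟨fun _ => ?_, fun h => ?_, fun _ => ?_⟩
      · simp only [show (2:ℕ)^2 - 1 = 3 by norm_num, show (2:ℕ)^1 - 1 = 1 by norm_num,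
          s3, s1, sternP_one]
        rw [show (1:Polynomial ℤ) + X - X * 1 = 1 by ring, degree_one]
        simp
      · have ha : aseq (0+1) = 1 := rfl
        omega
      · simp only [show (2:ℕ)^2 + 1 = 5 by norm_num, show (2:ℕ)^1 - 1 = 1 by norm_num,
          s5, s1, sternP_one]
        rw [show X + ((1:Polynomial ℤ) + X) - X * 1 = X + C 1 by simp; ring, degree_X_add_C,
          degree_one, zero_add]
    | (m+2) =>
      have ha : aseq (0+1) = 1 := rfl
      exact ⟨fun h => by omega, fun h => by omega, fun h => by omega⟩
  | succ n ih =>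
    intro m
    show (m ≤ aseq (n+2) →
        (SZ (2^(n+3) - m) - X * SZ (2^(n+2) - m)).degree ≤ (sternP (2^(n+2) - m)).degree) ∧
      (m < aseq (n+2) →
        (SZ (2^(n+3) + m) - X * SZ (2^(n+2) - m)).degree ≤ (sternP (2^(n+2) - m)).degree) ∧
      (m = aseq (n+2) →
        (SZ (2^(n+3) + m) - X * SZ (2^(n+2) - m)).degree ≤ (sternP (2^(n+2) - m)).degree + 1)
    have hA := aseq_two n
    have hApos := aseq_pos n
    have hApos2 := aseq_pos (n+1)
    have hAle := aseq_le n
    have hAle2 := aseq_le (n+1)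
    have p1 : (2:ℕ)^(n+1) = 2*2^n := by ring
    have p2 : (2:ℕ)^(n+2) = 2*2^(n+1) := by ring
    have p3 : (2:ℕ)^(n+3) = 2*2^(n+2) := by ring
    rcases Nat.even_or_odd m with ⟨j, hj⟩ | ⟨j, hj⟩
    · -- m = j + j even
      subst hj
      refine ⟨fun hm => ?_, fun hm => ?_, fun hm => ?_⟩
      · -- K1
        have hjA : j ≤ aseq (n+1) := by omega
        have r1 : 2^(n+3) - (j+j) = 2*(2^(n+2) - j) := by omega
        have r2 : 2^(n+2) - (j+j) = 2*(2^(n+1) - j) := by omega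
        have hne : 2^(n+1) - j ≠ 0 := by omega
        rw [r1, r2, SZ_even, SZ_even, deg_even hne,
          show X * SZ (2^(n+2) - j) - X * (X * SZ (2^(n+1) - j))
            = X * (SZ (2^(n+2) - j) - X * SZ (2^(n+1) - j)) by ring]
        calc (X * (SZ (2^(n+2) - j) - X * SZ (2^(n+1) - j))).degree
            ≤ X.degree + (SZ (2^(n+2) - j) - X * SZ (2^(n+1) - j)).degree := degree_mul_le _ _
          _ ≤ 1 + (sternP (2^(n+1) - j)).degree := by
              rw [degree_X]; exact add_le_add_right ((ih j).1 hjA) 1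
          _ = (sternP (2^(n+1) - j)).degree + 1 := by rw [add_comm]
      · -- K2
        have hjA : j < aseq (n+1) := by omega
        have r1 : 2^(n+3) + (j+j) = 2*(2^(n+2) + j) := by omega
        have r2 : 2^(n+2) - (j+j) = 2*(2^(n+1) - j) := by omega
        have hne : 2^(n+1) - j ≠ 0 := by omega
        rw [r1, r2, SZ_even, SZ_even, deg_even hne,
          show X * SZ (2^(n+2) + j) - X * (X * SZ (2^(n+1) - j))
            = X * (SZ (2^(n+2) + j) - X * SZ (2^(n+1) - j)) by ring]
        calc (X * (SZ (2^(n+2) + j) - X * SZ (2^(n+1) - j))).degree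
            ≤ X.degree + (SZ (2^(n+2) + j) - X * SZ (2^(n+1) - j)).degree := degree_mul_le _ _
          _ ≤ 1 + (sternP (2^(n+1) - j)).degree := by
              rw [degree_X]; exact add_le_add_right ((ih j).2.1 hjA) 1
          _ = (sternP (2^(n+1) - j)).degree + 1 := by rw [add_comm]
      · -- K3, m = aseq (n+2) even, so n % 2 = 0 and j = aseq (n+1)
        have hjA : j = aseq (n+1) := by omega
        have r1 : 2^(n+3) + (j+j) = 2*(2^(n+2) + j) := by omega
        have r2 : 2^(n+2) - (j+j) = 2*(2^(n+1) - j) := by omega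
        have hne : 2^(n+1) - j ≠ 0 := by omega
        rw [r1, r2, SZ_even, SZ_even, deg_even hne,
          show X * SZ (2^(n+2) + j) - X * (X * SZ (2^(n+1) - j))
            = X * (SZ (2^(n+2) + j) - X * SZ (2^(n+1) - j)) by ring]
        calc (X * (SZ (2^(n+2) + j) - X * SZ (2^(n+1) - j))).degree
            ≤ X.degree + (SZ (2^(n+2) + j) - X * SZ (2^(n+1) - j)).degree := degree_mul_le _ _
          _ ≤ 1 + ((sternP (2^(n+1) - j)).degree + 1) := by
              rw [degree_X]; exact add_le_add_right ((ih j).2.2 hjA) 1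
          _ = (sternP (2^(n+1) - j)).degree + 1 + 1 := by rw [← add_assoc, add_comm 1]
    · -- m = 2*j + 1 odd
      subst hj
      refine ⟨fun hm => ?_, fun hm => ?_, fun hm => ?_⟩
      · -- K1
        have hjA : j + 1 ≤ aseq (n+1) := by omega
        have r1 : 2^(n+3) - (2*j+1) = 2*(2^(n+2) - (j+1)) + 1 := by omega
        have r2 : 2^(n+2) - (2*j+1) = 2*(2^(n+1) - (j+1)) + 1 := by omega
        have r4 : 2^(n+2) - (j+1) + 1 = 2^(n+2) - j := by omega
        have r5 : 2^(n+1) - (j+1) + 1 = 2^(n+1) - j := by omega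
        rw [r1, r2, SZ_odd, SZ_odd, deg_odd, r4, r5,
          show SZ (2^(n+2) - (j+1)) + SZ (2^(n+2) - j)
              - X * (SZ (2^(n+1) - (j+1)) + SZ (2^(n+1) - j))
            = (SZ (2^(n+2) - (j+1)) - X * SZ (2^(n+1) - (j+1)))
              + (SZ (2^(n+2) - j) - X * SZ (2^(n+1) - j)) by ring]
        refine le_trans (degree_add_le _ _) (max_le ?_ ?_)
        · exact le_trans ((ih (j+1)).1 hjA) (le_max_left _ _)
        · exact le_trans ((ih j).1 (by omega)) (le_max_right _ _)
      · -- K2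
        have hjA : j < aseq (n+1) := by omega
        have r1 : 2^(n+3) + (2*j+1) = 2*(2^(n+2) + j) + 1 := by omega
        have r2 : 2^(n+2) - (2*j+1) = 2*(2^(n+1) - (j+1)) + 1 := by omega
        have r5 : 2^(n+1) - (j+1) + 1 = 2^(n+1) - j := by omega
        rw [r1, r2, SZ_odd, SZ_odd, deg_odd, r5,
          show SZ (2^(n+2) + j) + SZ (2^(n+2) + j + 1)
              - X * (SZ (2^(n+1) - (j+1)) + SZ (2^(n+1) - j))
            = (SZ (2^(n+2) + j) - X * SZ (2^(n+1) - j))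
              + (SZ (2^(n+2) + j + 1) - X * SZ (2^(n+1) - (j+1))) by ring]
        refine le_trans (degree_add_le _ _) (max_le ?_ ?_)
        · exact le_trans ((ih j).2.1 hjA) (le_max_right _ _)
        · rcases eq_or_lt_of_le (show j + 1 ≤ aseq (n+1) by omega) with he | hlt
          · -- exceptional case: j + 1 = aseq (n+1), forces n % 2 = 0
            have hn2 : n % 2 = 0 := by omega
            have hS4 := (degree_at_c n).1 (by omega)
            have := (ih (j+1)).2.2 he
            refine le_trans this ?_
            rw [show 2^(n+1) - (j+1) = 2^(n+1) - aseq (n+1) by omega, hS4,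
              show 2^(n+1) - aseq (n+1) + 1 = 2^(n+1) - j by omega]
            exact le_max_right _ _
          · exact le_trans ((ih (j+1)).2.1 hlt) (le_max_left _ _)
      · -- K3, m = aseq (n+2) odd, so n % 2 = 1 and j + 1 = aseq (n+1)
        have hjA : j + 1 = aseq (n+1) := by omega
        have r1 : 2^(n+3) + (2*j+1) = 2*(2^(n+2) + j) + 1 := by omega
        have r2 : 2^(n+2) - (2*j+1) = 2*(2^(n+1) - (j+1)) + 1 := by omega
        have r5 : 2^(n+1) - (j+1) + 1 = 2^(n+1) - j := by omega
        rw [r1, r2, SZ_odd, SZ_odd, deg_odd, r5,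
          show SZ (2^(n+2) + j) + SZ (2^(n+2) + j + 1)
              - X * (SZ (2^(n+1) - (j+1)) + SZ (2^(n+1) - j))
            = (SZ (2^(n+2) + j) - X * SZ (2^(n+1) - j))
              + (SZ (2^(n+2) + j + 1) - X * SZ (2^(n+1) - (j+1))) by ring]
        refine le_trans (degree_add_le _ _) (max_le ?_ ?_)
        · refine le_trans ((ih j).2.1 (by omega)) ?_
          refine le_trans (le_max_right (sternP (2^(n+1) - (j+1))).degree
            (sternP (2^(n+1) - j)).degree) (wb_le_add_one _)
        · refine le_trans ((ih (j+1)).2.2 hjA) ?_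
          exact wb_add_le _ _ (le_max_left _ _)

lemma lc_of_key (c p : ℕ) (hc : c ≠ 0)
    (h : (SZ p - X * SZ c).degree ≤ (sternP c).degree) :
    (sternP p).leadingCoeff = (sternP c).leadingCoeff := by
  have hSc : SZ c ≠ 0 := by
    intro h0
    exact sternP_ne_zero hc
      (Polynomial.map_injective (Nat.castRingHom ℤ) Nat.cast_injective
        (by simpa [SZ] using h0))
  have hd : (X * SZ c).degree = (sternP c).degree + 1 := by
    rw [degree_mul, degree_X, SZ_degree, add_comm]
  have hlt : (SZ p - X * SZ c).degree < (X * SZ c).degree := by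
    rw [hd]
    refine lt_of_le_of_lt h ?_
    rw [degree_eq_natDegree (sternP_ne_zero hc)]
    exact_mod_cast Nat.lt_succ_self _
  have h3 := leadingCoeff_add_of_degree_lt hlt
  rw [sub_add_cancel] at h3
  have h4 : (X * SZ c).leadingCoeff = (SZ c).leadingCoeff := by
    rw [leadingCoeff_mul, leadingCoeff_X, one_mul]
  have h5 := h3.trans h4
  rw [SZ_lc, SZ_lc] at h5
  exact_mod_cast h5
theorem stern_lc_B (k u : ℕ) (hk : 3 ≤ k)
    (hu : u ≤ 2 ^ (k - 1) - (2 ^ (k - 1) - aseq (k - 2) + 1)) :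
    (sternP (2 ^ (k - 1) - aseq (k - 2) + 1 + u)).leadingCoeff
      = (sternP (aseq (k - 1) + u)).leadingCoeff ∧
    (sternP (2 ^ k - (2 ^ (k - 1) - aseq (k - 2) + 1 + u))).leadingCoeff
      = (sternP (aseq (k - 1) + u)).leadingCoeff := by
  obtain ⟨n, rfl⟩ : ∃ n, k = n + 3 := ⟨k - 3, by omega⟩
  have hApos := aseq_pos n
  have hAle := aseq_le n
  have hsum := aseq_sum n
  have p1 : (2:ℕ)^(n+1) = 2*2^n := by ring
  have p2 : (2:ℕ)^(n+2) = 2*2^(n+1) := by ring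
  have p3 : (2:ℕ)^(n+3) = 2*2^(n+2) := by ring
  have hu' : u ≤ 2^(n+2) - (2^(n+2) - aseq (n+1) + 1) := hu
  have hu2 : u + 1 ≤ aseq (n+1) := by omega
  show (sternP (2^(n+2) - aseq (n+1) + 1 + u)).leadingCoeff
      = (sternP (aseq (n+2) + u)).leadingCoeff ∧
    (sternP (2^(n+3) - (2^(n+2) - aseq (n+1) + 1 + u))).leadingCoeff
      = (sternP (aseq (n+2) + u)).leadingCoeff
  set m := aseq (n+1) - 1 - u with hm
  have r1 : 2^(n+2) - aseq (n+1) + 1 + u = 2^(n+2) - m := by omega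
  have r2 : 2^(n+3) - (2^(n+2) - m) = 2^(n+2) + m := by omega
  have r3 : aseq (n+2) + u = 2^(n+1) - m := by omega
  have hmlt : m < aseq (n+1) := by omega
  have hcne : 2^(n+1) - m ≠ 0 := by omega
  obtain ⟨K1, K2, -⟩ := key n m
  constructor
  · rw [r1, r3]
    exact lc_of_key _ _ hcne (K1 (le_of_lt hmlt))
  · rw [r1, r2, r3]
    exact lc_of_key _ _ hcne (K2 hmlt)
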